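/- The number of forests of rooted trees on the vertex set {1,...,n} equals (n+1)^{n-1}. -/

import Mathlib

/-- A forest of rooted trees on `{1,…,n}`: an acyclic graph together with a choice of
one distinguished root in each connected component. -/
def RootedForest (n : ℕ) :=
  (G : {H : SimpleGraph (Fin n) // H.IsAcyclic}) ×
    {r : G.1.ConnectedComponent → Fin n // ∀ c, G.1.connectedComponentMk (r c) = c}

open Function
namespace RF
variable {α β : Type*}

def step (f : α → α ⊕ β) : α ⊕ β → α ⊕ β := Sum.elim f Sum.inr
@[simp] lemma step_inl (f : α → α ⊕ β) (a : α) : step f (Sum.inl a) = f a := rfl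
@[simp] lemma step_inr (f : α → α ⊕ β) (b : β) : step f (Sum.inr b) = Sum.inr b := rfl
def Esc (f : α → α ⊕ β) : Prop := ∀ a, ∃ k, ((step f)^[k] (Sum.inl a)).isRight
abbrev E (α β : Type*) := {f : α → α ⊕ β // Esc f}
lemma getRight_eq {x : α ⊕ β} (hx : x.isRight) {b : β} (h : x = Sum.inr b) :
    x.getRight hx = b := by subst h; rfl

lemma esc_step (f : α → α ⊕ β) (a : α) (k : ℕ) :
    (step f)^[k+1] (Sum.inl a) = (step f)^[k] (f a) := by
  rw [iterate_succ_apply, step_inl]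

section Decomp
variable [DecidableEq α] [Fintype α]

def dSet (f : α → α ⊕ β) : Finset α := Finset.univ.filter (fun a => (f a).isRight)

@[simp] lemma mem_dSet {f : α → α ⊕ β} {a : α} : a ∈ dSet f ↔ (f a).isRight := by
  simp [dSet]

def restrict (f : α → α ⊕ β) (S : Finset α) (a : ↥(Sᶜ : Finset α)) :
    ↥(Sᶜ : Finset α) ⊕ ↥S :=
  match f a.1 with
  | .inr _ => .inl a
  | .inl a' => if h : a' ∈ S then .inr ⟨a', h⟩ else .inl ⟨a', by simp [h]⟩

def glue (S : Finset α) (h : ↥S → β) (g : ↥(Sᶜ : Finset α) → ↥(Sᶜ : Finset α) ⊕ ↥S) :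
    α → α ⊕ β := fun a =>
  if ha : a ∈ S then .inr (h ⟨a, ha⟩) else
    match g ⟨a, by simp [ha]⟩ with
    | .inl a' => .inl a'.1
    | .inr s => .inl s.1

lemma esc_restrict_aux (f : α → α ⊕ β) (S : Finset α) (hS : dSet f = S) :
    ∀ (k : ℕ) (a : α) (ha : a ∈ (Sᶜ : Finset α)),
      ((step f)^[k] (Sum.inl a)).isRight →
      ∃ j, ((step (restrict f S))^[j] (Sum.inl ⟨a, ha⟩)).isRight := by
  intro k
  induction k with
  | zero => intro a ha h; simp at h
  | succ k ih =>
    intro a ha h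
    rw [esc_step] at h
    have hanS : a ∉ S := by simpa using ha
    rcases hfa : f a with a' | b
    · rcases Finset.decidableMem a' S with h' | h'
      · -- a' ∉ S
        rw [hfa] at h
        obtain ⟨j, hj⟩ := ih a' (by simpa using h') h
        refine ⟨j + 1, ?_⟩
        rw [esc_step]
        have : restrict f S ⟨a, ha⟩ = .inl ⟨a', by simpa using h'⟩ := by
          simp [restrict, hfa, h']
        rw [this]; exact hj
      · refine ⟨1, ?_⟩
        have : restrict f S ⟨a, ha⟩ = .inr ⟨a', h'⟩ := by simp [restrict, hfa, h']
        simp [this]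
    · exfalso
      have : (f a).isRight := by simp [hfa]
      rw [← mem_dSet (f := f), hS] at this
      exact hanS this

lemma esc_glue_aux (S : Finset α) (h : ↥S → β)
    (g : ↥(Sᶜ : Finset α) → ↥(Sᶜ : Finset α) ⊕ ↥S) :
    ∀ (j : ℕ) (a : ↥(Sᶜ : Finset α)),
      ((step g)^[j] (Sum.inl a)).isRight →
      ∃ k, ((step (glue S h g))^[k] (Sum.inl a.1)).isRight := by
  intro j
  induction j with
  | zero => intro a hj; simp at hj
  | succ j ih =>
    intro a hj
    rw [esc_step] at hj
    have hanS : a.1 ∉ S := Finset.mem_compl.mp a.2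
    rcases hga : g a with a' | s
    · rw [hga] at hj
      obtain ⟨k, hk⟩ := ih a' hj
      refine ⟨k + 1, ?_⟩
      rw [esc_step]
      have : glue S h g a.1 = .inl a'.1 := by
        simp only [glue, dif_neg hanS]
        rw [show (⟨a.1, by simp [hanS]⟩ : ↥(Sᶜ : Finset α)) = a from Subtype.ext rfl, hga]
      rw [this]; exact hk
    · refine ⟨2, ?_⟩
      rw [esc_step]
      have h1 : glue S h g a.1 = .inl s.1 := by
        simp only [glue, dif_neg hanS]
        rw [show (⟨a.1, by simp [hanS]⟩ : ↥(Sᶜ : Finset α)) = a from Subtype.ext rfl, hga]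
      rw [h1, esc_step]
      have h2 : glue S h g s.1 = .inr (h ⟨s.1, s.2⟩) := by
        simp [glue, s.2]
      simp [h2]

lemma esc_glue (S : Finset α) (h : ↥S → β)
    {g : ↥(Sᶜ : Finset α) → ↥(Sᶜ : Finset α) ⊕ ↥S} (hg : Esc g) :
    Esc (glue S h g) := by
  intro a
  by_cases ha : a ∈ S
  · refine ⟨1, ?_⟩
    rw [esc_step]
    simp [glue, ha]
  · obtain ⟨j, hj⟩ := hg ⟨a, by simpa using ha⟩
    exact esc_glue_aux S h g j ⟨a, by simpa using ha⟩ hj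

@[simp] lemma dSet_glue (S : Finset α) (h : ↥S → β)
    (g : ↥(Sᶜ : Finset α) → ↥(Sᶜ : Finset α) ⊕ ↥S) : dSet (glue S h g) = S := by
  ext a
  simp only [mem_dSet, glue]
  by_cases ha : a ∈ S
  · simp [ha]
  · simp only [dif_neg ha]
    rcases g ⟨a, by simp [ha]⟩ with a' | s <;> simp [ha]

def pieceEquiv (S : Finset α) :
    {f : E α β // dSet f.1 = S} ≃ ((↥S → β) × E ↥(Sᶜ : Finset α) ↥S) where
  toFun f :=
    ⟨fun s => (f.1.1 s.1).getRight (by rw [← mem_dSet (f := f.1.1), f.2]; exact s.2),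
     ⟨restrict f.1.1 S, by
        intro a
        obtain ⟨k, hk⟩ := f.1.2 a.1
        exact esc_restrict_aux f.1.1 S f.2 k a.1 a.2 hk⟩⟩
  invFun p := ⟨⟨glue S p.1 p.2.1, esc_glue S p.1 p.2.2⟩, dSet_glue S p.1 p.2.1⟩
  left_inv f := by
    apply Subtype.ext; apply Subtype.ext
    funext a
    by_cases ha : a ∈ S
    · have hr : (f.1.1 a).isRight := by rw [← mem_dSet (f := f.1.1), f.2]; exact ha
      rcases hfa : f.1.1 a with a' | b
      · rw [hfa] at hr; simp at hr
      · simp [glue, ha, hfa]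
    · have hr : ¬ (f.1.1 a).isRight := by rw [← mem_dSet (f := f.1.1), f.2]; exact ha
      rcases hfa : f.1.1 a with a' | b
      · simp only [glue, dif_neg ha]
        have : restrict f.1.1 S ⟨a, by simp [ha]⟩ =
            (if h : a' ∈ S then .inr ⟨a', h⟩ else .inl ⟨a', by simp [h]⟩) := by
          simp [restrict, hfa]
        rw [this]
        by_cases h' : a' ∈ S <;> simp [h']
      · rw [hfa] at hr; simp at hr
  right_inv p := by
    obtain ⟨h, g, hg⟩ := p
    refine Prod.ext ?_ (Subtype.ext ?_)
    · funext s
      have : glue S h g s.1 = .inr (h ⟨s.1, s.2⟩) := by simp [glue, s.2]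
      exact getRight_eq _ this
    · funext a
      have hanS : a.1 ∉ S := Finset.mem_compl.mp a.2
      have hga : glue S h g a.1 =
          (match g a with | .inl a' => .inl a'.1 | .inr s => .inl s.1) := by
        simp only [glue, dif_neg hanS]
      rcases hg' : g a with a' | s
      · rw [hg'] at hga
        have ha'nS : a'.1 ∉ S := Finset.mem_compl.mp a'.2
        simp only [restrict, hga]
        rw [dif_neg ha'nS]
        exact hg'.symm
      · rw [hg'] at hga
        simp only [restrict, hga]
        rw [dif_pos s.2]
        exact hg'.symm

def decompE : E α β ≃ Σ S : Finset α, ((↥S → β) × E ↥(Sᶜ : Finset α) ↥S) :=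
  (Equiv.sigmaFiberEquiv (fun f : E α β => dSet f.1)).symm.trans
    (Equiv.sigmaCongrRight pieceEquiv)

end Decomp

section Count

lemma nat_card_sigma {ι : Type*} [Fintype ι] (F : ι → Type*) [∀ i, Finite (F i)] :
    Nat.card (Σ i, F i) = ∑ i, Nat.card (F i) := by
  classical
  letI : ∀ i, Fintype (F i) := fun i => Fintype.ofFinite _
  simp [Nat.card_eq_fintype_card]

variable {α' β' : Type*}

lemma step_map (f : α → α ⊕ β) (eα : α ≃ α') (eβ : β ≃ β') (s : α ⊕ β) :
    step (fun a' => Sum.map eα eβ (f (eα.symm a'))) (Sum.map eα eβ s)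
      = Sum.map eα eβ (step f s) := by
  cases s with
  | inl a => simp [step]
  | inr b => simp [step]

lemma iterate_step_map (f : α → α ⊕ β) (eα : α ≃ α') (eβ : β ≃ β') (k : ℕ) (s : α ⊕ β) :
    (step (fun a' => Sum.map eα eβ (f (eα.symm a'))))^[k] (Sum.map eα eβ s)
      = Sum.map eα eβ ((step f)^[k] s) := by
  induction k generalizing s with
  | zero => rfl
  | succ k ih => rw [iterate_succ_apply, iterate_succ_apply, step_map, ih]

lemma esc_map {f : α → α ⊕ β} (hf : Esc f) (eα : α ≃ α') (eβ : β ≃ β') :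
    Esc (fun a' => Sum.map eα eβ (f (eα.symm a'))) := by
  intro a'
  obtain ⟨k, hk⟩ := hf (eα.symm a')
  refine ⟨k, ?_⟩
  have h2 := iterate_step_map f eα eβ k (Sum.inl (eα.symm a'))
  simp only [Sum.map_inl, Equiv.apply_symm_apply] at h2
  rw [h2]
  rcases h : (step f)^[k] (Sum.inl (eα.symm a')) with a | b
  · rw [h] at hk; simp at hk
  · simp

/-- Relabelling equivalence. -/
def congrE (eα : α ≃ α') (eβ : β ≃ β') : E α β ≃ E α' β' where
  toFun f := ⟨fun a' => Sum.map eα eβ (f.1 (eα.symm a')), esc_map f.2 eα eβ⟩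
  invFun f := ⟨fun a => Sum.map eα.symm eβ.symm (f.1 (eα a)), by
    simpa using esc_map f.2 eα.symm eβ.symm⟩
  left_inv f := by
    apply Subtype.ext; funext a
    simp [Sum.map_map]
  right_inv f := by
    apply Subtype.ext; funext a'
    simp [Sum.map_map]

/-- `c n m` : the number of rooted forests on `n` vertices with roots labelled by `m` colours. -/
noncomputable def c (n m : ℕ) : ℕ := Nat.card (E (Fin n) (Fin m))

lemma card_E (α β : Type*) [Fintype α] [Fintype β] :
    Nat.card (E α β) = c (Fintype.card α) (Fintype.card β) :=
  Nat.card_congr (congrE (Fintype.equivFin α) (Fintype.equivFin β))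

lemma c_zero (m : ℕ) : c 0 m = 1 := by
  rw [c, Nat.card_eq_one_iff_unique]
  constructor
  · constructor
    intro f g
    apply Subtype.ext; funext a; exact a.elim0
  · exact ⟨⟨fun a => a.elim0, fun a => a.elim0⟩⟩

lemma c_ground_zero (n : ℕ) (hn : 1 ≤ n) : c n 0 = 0 := by
  rw [c, Nat.card_eq_zero]
  left
  constructor
  intro f
  obtain ⟨k, hk⟩ := f.2 ⟨0, hn⟩
  rcases h : (step f.1)^[k] (Sum.inl (⟨0, hn⟩ : Fin n)) with a | b
  · rw [h] at hk; simp at hk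
  · exact b.elim0

lemma c_rec (n m : ℕ) : c n m = ∑ k ∈ Finset.range (n+1), n.choose k * (m ^ k * c (n-k) k) := by
  classical
  rw [c, Nat.card_congr (decompE (α := Fin n) (β := Fin m)), nat_card_sigma]
  have hterm : ∀ S : Finset (Fin n),
      Nat.card ((↥S → Fin m) × E ↥(Sᶜ : Finset (Fin n)) ↥S)
        = m ^ S.card * c (n - S.card) S.card := by
    intro S
    rw [Nat.card_prod, Nat.card_fun]
    congr 1
    · rw [Nat.card_eq_fintype_card, Nat.card_eq_fintype_card, Fintype.card_fin,
        Fintype.card_coe]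
    · rw [card_E]
      congr 1
      · rw [Fintype.card_coe, Finset.card_compl, Fintype.card_fin]
      · rw [Fintype.card_coe]
  rw [Finset.sum_congr rfl (fun S _ => hterm S)]
  rw [← Finset.powerset_univ, Finset.powerset_card_disjiUnion]
  erw [Finset.sum_disjiUnion]
  rw [Finset.card_univ, Fintype.card_fin]
  refine Finset.sum_congr rfl ?_
  intro k hk
  have : ∀ S ∈ Finset.powersetCard k (Finset.univ : Finset (Fin n)),
      m ^ S.card * c (n - S.card) S.card = m ^ k * c (n-k) k := by
    intro S hS
    rw [(Finset.mem_powersetCard.mp hS).2]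
  rw [Finset.sum_congr rfl this, Finset.sum_const, Finset.card_powersetCard,
    Finset.card_univ, Fintype.card_fin, smul_eq_mul]

lemma c_closed : ∀ n : ℕ, 1 ≤ n → ∀ m : ℕ, c n m = m * (n + m) ^ (n - 1) := by
  intro n
  induction n using Nat.strong_induction_on with
  | _ n ih =>
    intro hn m
    obtain ⟨N, rfl⟩ : ∃ N, n = N + 1 := ⟨n - 1, by omega⟩
    rw [c_rec, Finset.sum_range_succ']
    have h0 : (N+1).choose 0 * (m ^ 0 * c (N+1-0) 0) = 0 := by
      simp [c_ground_zero (N+1) (by omega)]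
    rw [h0, add_zero, Finset.sum_range_succ]
    have hlast : (N+1).choose (N+1) * (m ^ (N+1) * c (N+1-(N+1)) (N+1)) = m ^ (N+1) := by
      simp [c_zero]
    rw [hlast]
    have hsum : ∀ k ∈ Finset.range N,
        (N+1).choose (k+1) * (m ^ (k+1) * c (N+1-(k+1)) (k+1))
          = (N+1).choose (k+1) * (m ^ (k+1) * ((k+1) * (N+1) ^ (N-k-1))) := by
      intro k hk
      have hk' : k < N := Finset.mem_range.mp hk
      have e1 : N+1-(k+1) = N - k := by omega
      rw [e1, ih (N-k) (by omega) (by omega) (k+1),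
        show N - k + (k+1) = N+1 from by omega]
    rw [Finset.sum_congr rfl hsum]
    apply Nat.eq_of_mul_eq_mul_left (show 0 < N+1 by omega)
    rw [Nat.mul_add, Finset.mul_sum]
    have hterm : ∀ k ∈ Finset.range N,
        (N+1) * ((N+1).choose (k+1) * (m ^ (k+1) * ((k+1) * (N+1) ^ (N-k-1))))
          = (N+1) * (m * (m ^ k * ((N+1) ^ (N-k) * N.choose k))) := by
      intro k hk
      have hk' : k < N := Finset.mem_range.mp hk
      have e2 : (N+1) * (N+1) ^ (N-k-1) = (N+1) ^ (N-k) := by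
        rw [← pow_succ']
        congr 1
        omega
      calc (N+1) * ((N+1).choose (k+1) * (m ^ (k+1) * ((k+1) * (N+1) ^ (N-k-1))))
          = ((N+1).choose (k+1) * (k+1)) * (m ^ (k+1) * ((N+1) * (N+1) ^ (N-k-1))) := by ring
        _ = ((N+1) * N.choose k) * (m ^ (k+1) * (N+1) ^ (N-k)) := by
            rw [← Nat.add_one_mul_choose_eq, e2]
        _ = (N+1) * (m * (m ^ k * ((N+1) ^ (N-k) * N.choose k))) := by
            rw [pow_succ]; ring
    rw [Finset.sum_congr rfl hterm]
    have hlast2 : (N+1) * m ^ (N+1) = (N+1) * (m * (m ^ N * ((N+1) ^ (N-N) * N.choose N))) := by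
      simp [pow_succ]; ring
    rw [hlast2, ← Finset.sum_range_succ (fun k => (N+1) * (m * (m ^ k * ((N+1) ^ (N-k) * N.choose k)))) N]
    have : ∀ k ∈ Finset.range (N+1),
        (N+1) * (m * (m ^ k * ((N+1) ^ (N-k) * N.choose k)))
          = ((N+1) * m) * (m ^ k * (N+1) ^ (N-k) * N.choose k) := by
      intro k _; ring
    rw [Finset.sum_congr rfl this, ← Finset.mul_sum]
    have hb : (m + (N+1)) ^ N = ∑ k ∈ Finset.range (N+1), m ^ k * (N+1) ^ (N-k) * N.choose k := by
      have h := add_pow m (N+1) N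
      simpa using h
    rw [← hb, Nat.add_sub_cancel, show N+1+m = m+(N+1) from by ring]
    ring

end Count
section Graph

open SimpleGraph Walk
open scoped Classical

variable {V : Type*}

section FunToGraph
variable (f : V → V ⊕ Fin 1) (hf : Esc f)

/-- Height: number of steps needed to escape. -/
noncomputable def ht (a : V) : ℕ := Nat.find (hf a)

lemma ht_spec (a : V) : ((step f)^[ht f hf a] (Sum.inl a)).isRight := Nat.find_spec (hf a)

lemma ht_pos (a : V) : 1 ≤ ht f hf a := by
  rcases Nat.eq_zero_or_pos (ht f hf a) with h | h
  · exfalso; have := ht_spec f hf a; rw [h] at this; simp at this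
  · exact h

lemma ht_step {a a' : V} (h : f a = Sum.inl a') : ht f hf a = ht f hf a' + 1 := by
  have h1 : ((step f)^[ht f hf a' + 1] (Sum.inl a)).isRight := by
    rw [esc_step, h]; exact ht_spec f hf a'
  have h2 : ht f hf a ≤ ht f hf a' + 1 := Nat.find_le h1
  have h3 : ((step f)^[ht f hf a] (Sum.inl a)).isRight := ht_spec f hf a
  have h4 : 1 ≤ ht f hf a := ht_pos f hf a
  obtain ⟨j, hj⟩ : ∃ j, ht f hf a = j + 1 := ⟨ht f hf a - 1, by omega⟩
  rw [hj, esc_step, h] at h3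
  have h5 : ht f hf a' ≤ j := Nat.find_le h3
  omega

lemma ht_ground {a : V} {b : Fin 1} (h : f a = Sum.inr b) : ht f hf a = 1 := by
  have h1 : ((step f)^[1] (Sum.inl a)).isRight := by
    rw [esc_step, h]; simp
  have h2 : ht f hf a ≤ 1 := Nat.find_le h1
  have h3 := ht_pos f hf a
  omega

include hf in
lemma no_fixed (a : V) : f a ≠ Sum.inl a := by
  intro h
  have := ht_step f hf h
  omega

include hf in
/-- Induction principle along the escaping dynamics. -/
lemma esc_induction (P : V → Prop)
    (base : ∀ a b, f a = Sum.inr b → P a)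
    (ind : ∀ a a', f a = Sum.inl a' → P a' → P a) : ∀ a, P a := by
  suffices h : ∀ n a, ht f hf a ≤ n → P a from fun a => h (ht f hf a) a le_rfl
  intro n
  induction n with
  | zero => intro a ha; exact absurd ha (by have := ht_pos f hf a; omega)
  | succ n ih =>
    intro a ha
    rcases h : f a with a' | b
    · exact ind a a' h (ih a' (by have := ht_step f hf h; omega))
    · exact base a b h

/-- The graph associated to a parent function. -/
def fGraph : SimpleGraph V := SimpleGraph.fromRel (fun x y => f x = Sum.inl y)

lemma fGraph_adj {x y : V} : (fGraph f).Adj x y ↔ x ≠ y ∧ (f x = Sum.inl y ∨ f y = Sum.inl x) :=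
  SimpleGraph.fromRel_adj _ x y

include hf in
lemma adj_of_step {x y : V} (h : f x = Sum.inl y) : (fGraph f).Adj x y :=
  (fGraph_adj f).mpr ⟨fun he => no_fixed f hf x (he ▸ h), Or.inl h⟩

lemma adj_ht {x y : V} (h : (fGraph f).Adj x y) :
    (f x = Sum.inl y ∧ ht f hf x = ht f hf y + 1)
      ∨ (f y = Sum.inl x ∧ ht f hf y = ht f hf x + 1) := by
  rcases (fGraph_adj f).mp h with ⟨-, h' | h'⟩
  · exact Or.inl ⟨h', ht_step f hf h'⟩
  · exact Or.inr ⟨h', ht_step f hf h'⟩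

include hf in
lemma fGraph_acyclic : (fGraph f).IsAcyclic := by
  intro v c hc
  obtain ⟨x, hx, hmax⟩ : ∃ x ∈ c.support, ∀ y ∈ c.support, ht f hf y ≤ ht f hf x := by
    obtain ⟨x, hx1, hx2⟩ := Finset.exists_max_image c.support.toFinset (fun y => ht f hf y)
      ⟨v, by simp⟩
    exact ⟨x, by simpa using hx1, fun y hy => hx2 y (by simpa using hy)⟩
  have hc' : (c.rotate x hx).IsCycle := hc.rotate hx
  have hsup : ∀ y ∈ (c.rotate x hx).support, ht f hf y ≤ ht f hf x := by
    intro y hy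
    rw [SimpleGraph.Walk.support_eq_cons] at hy
    rcases List.mem_cons.mp hy with rfl | hy'
    · exact le_rfl
    · exact hmax y (List.mem_of_mem_tail ((SimpleGraph.Walk.support_rotate c x hx).mem_iff.mp hy'))
  revert hc' hsup
  generalize c.rotate x hx = c'
  intro hc' hsup
  have hn : ¬ c'.Nil := hc'.not_nil
  obtain ⟨b, hadj, q, hq⟩ := Walk.not_nil_iff.mp hn
  have hlen : 3 ≤ c'.length := hc'.three_le_length
  have hqn : ¬ q.reverse.Nil := by
    rw [Walk.not_nil_iff_lt_length, Walk.length_reverse]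
    have : c'.length = q.length + 1 := by rw [hq, Walk.length_cons]
    omega
  obtain ⟨b₂, hadj₂, q₂, hq₂⟩ := Walk.not_nil_iff.mp hqn
  have hb : b ∈ c'.support := by
    rw [hq, Walk.support_cons]
    exact List.mem_cons_of_mem _ q.start_mem_support
  have hb₂q : b₂ ∈ q.support := by
    have h2 : b₂ ∈ q.reverse.support := by
      rw [hq₂, Walk.support_cons]
      exact List.mem_cons_of_mem _ q₂.start_mem_support
    rwa [Walk.support_reverse, List.mem_reverse] at h2
  have hb₂ : b₂ ∈ c'.support := by
    rw [hq, Walk.support_cons]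
    exact List.mem_cons_of_mem _ hb₂q
  have hnodup : c'.edges.Nodup := hc'.isCircuit.isTrail.edges_nodup
  have hedge1 : c'.edges = s(x, b) :: q.edges := by rw [hq, Walk.edges_cons]
  have hmem : s(x, b₂) ∈ q.edges := by
    have h1 : s(x, b₂) ∈ q.reverse.edges := by
      rw [hq₂, Walk.edges_cons]
      exact List.mem_cons_self
    rwa [Walk.edges_reverse, List.mem_reverse] at h1
  have hnot : s(x, b) ∉ q.edges := by
    rw [hedge1] at hnodup
    exact (List.nodup_cons.mp hnodup).1
  have hfb : f x = Sum.inl b := by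
    rcases adj_ht f hf hadj with ⟨h1, -⟩ | ⟨-, h2⟩
    · exact h1
    · exact absurd (hsup b hb) (by omega)
  have hfb₂ : f x = Sum.inl b₂ := by
    rcases adj_ht f hf hadj₂ with ⟨h1, -⟩ | ⟨-, h2⟩
    · exact h1
    · exact absurd (hsup b₂ hb₂) (by omega)
  have hbb : b = b₂ := by
    rw [hfb] at hfb₂; exact Sum.inl.inj hfb₂
  subst hbb
  exact hnot hmem

/-- Auxiliary recursion for `vroot`. -/
def vrootAux (f : V → V ⊕ Fin 1) : ℕ → V → V
  | 0, a => a
  | (k+1), a => match f a with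
    | .inl a' => vrootAux f k a'
    | .inr _ => a

/-- The root of the tree containing `a`: follow `f` until just before escaping. -/
noncomputable def vroot : V → V := fun a => vrootAux f (ht f hf a) a

lemma vroot_ground {a : V} {b : Fin 1} (h : f a = Sum.inr b) : vroot f hf a = a := by
  unfold vroot
  rw [ht_ground f hf h]
  simp [vrootAux, h]

lemma vroot_step {a a' : V} (h : f a = Sum.inl a') : vroot f hf a = vroot f hf a' := by
  unfold vroot
  rw [ht_step f hf h]
  simp [vrootAux, h]

include hf in
lemma f_vroot (a : V) : ∃ b, f (vroot f hf a) = Sum.inr b := by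
  induction a using esc_induction f hf with
  | base a b h => exact ⟨b, by rwa [vroot_ground f hf h]⟩
  | ind a a' h ih => rwa [vroot_step f hf h]

include hf in
lemma reachable_vroot (a : V) : (fGraph f).Reachable a (vroot f hf a) := by
  induction a using esc_induction f hf with
  | base a b h => rw [vroot_ground f hf h]
  | ind a a' h ih =>
    rw [vroot_step f hf h]
    exact (adj_of_step f hf h).reachable.trans ih

include hf in
lemma vroot_adj {x y : V} (h : (fGraph f).Adj x y) : vroot f hf x = vroot f hf y := by
  rcases (fGraph_adj f).mp h with ⟨-, h' | h'⟩
  · exact vroot_step f hf h'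
  · exact (vroot_step f hf h').symm

include hf in
lemma vroot_reachable {x y : V} (h : (fGraph f).Reachable x y) :
    vroot f hf x = vroot f hf y := by
  obtain ⟨p⟩ := h
  induction p with
  | nil => rfl
  | cons hadj q ih => exact (vroot_adj f hf hadj).trans ih

end FunToGraph
end Graph

section GraphToFun

open SimpleGraph Walk
open scoped Classical

variable {V : Type*}
variable (G : SimpleGraph V) (ρ : V → V)

/-- A chosen path from `x` to its root. -/
noncomputable def pathTo (hρ2 : ∀ x, G.Reachable x (ρ x)) (x : V) : G.Path x (ρ x) :=
  (Classical.choice (hρ2 x)).toPath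

/-- The parent function of a rooted forest. -/
noncomputable def par (hρ2 : ∀ x, G.Reachable x (ρ x)) (x : V) : V ⊕ Fin 1 :=
  if x = ρ x then Sum.inr 0 else Sum.inl ((pathTo G ρ hρ2 x).1.getVert 1)

variable (hG : G.IsAcyclic) (hρ1 : ∀ x y, G.Reachable x y → ρ x = ρ y)
  (hρ2 : ∀ x, G.Reachable x (ρ x))

include hG in
lemma path_eq {x : V} (q : G.Walk x (ρ x)) (hq : q.IsPath) : q = (pathTo G ρ hρ2 x).1 :=
  congrArg Subtype.val (hG.path_unique ⟨q, hq⟩ (pathTo G ρ hρ2 x))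

lemma par_root {x : V} (hx : x = ρ x) : par G ρ hρ2 x = Sum.inr 0 := by
  unfold par; exact if_pos hx

lemma par_not_root {x : V} (hx : x ≠ ρ x) :
    par G ρ hρ2 x = Sum.inl ((pathTo G ρ hρ2 x).1.getVert 1) := by
  unfold par; exact if_neg hx

include hG hρ1 in
lemma par_step {x : V} (hx : x ≠ ρ x) :
    ∃ y, par G ρ hρ2 x = Sum.inl y ∧ G.Adj x y ∧
      (pathTo G ρ hρ2 y).1.length + 1 = (pathTo G ρ hρ2 x).1.length := by
  set p := (pathTo G ρ hρ2 x).1 with hp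
  have hpp : p.IsPath := (pathTo G ρ hρ2 x).2
  have hn : ¬ p.Nil := Walk.not_nil_of_ne hx
  refine ⟨p.getVert 1, par_not_root G ρ hρ2 hx, p.adj_snd hn, ?_⟩
  have hadj : G.Adj x (p.getVert 1) := p.adj_snd hn
  have hroots : ρ x = ρ (p.getVert 1) := hρ1 _ _ hadj.reachable
  have hq : (p.tail.copy rfl hroots : G.Walk (p.getVert 1) (ρ (p.getVert 1))).IsPath := by
    simpa using hpp.tail
  have := path_eq G ρ hG hρ2 _ hq
  have hlen : (pathTo G ρ hρ2 (p.getVert 1)).1.length = p.tail.length := by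
    rw [← this, Walk.length_copy]
  rw [hlen]
  have := p.length_tail_add_one hn
  omega

include hG hρ1 in
lemma par_esc : Esc (par G ρ hρ2) := by
  suffices h : ∀ n x, (pathTo G ρ hρ2 x).1.length ≤ n →
      ∃ k, ((step (par G ρ hρ2))^[k] (Sum.inl x)).isRight by
    intro x; exact h _ x le_rfl
  intro n
  induction n with
  | zero =>
    intro x hx
    have : x = ρ x := Walk.eq_of_length_eq_zero (Nat.le_zero.mp hx)
    exact ⟨1, by rw [esc_step, par_root G ρ hρ2 this]; simp⟩
  | succ n ih =>
    intro x hx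
    by_cases hroot : x = ρ x
    · exact ⟨1, by rw [esc_step, par_root G ρ hρ2 hroot]; simp⟩
    · obtain ⟨y, hy, -, hlen⟩ := par_step G ρ hG hρ1 hρ2 hroot
      obtain ⟨k, hk⟩ := ih y (by omega)
      exact ⟨k + 1, by rwa [esc_step, hy]⟩

include hG in
lemma par_adj {x y : V} (h : par G ρ hρ2 x = Sum.inl y) : G.Adj x y := by
  by_cases hx : x = ρ x
  · rw [par_root G ρ hρ2 hx] at h; cases h
  · rw [par_not_root G ρ hρ2 hx] at h
    have hn : ¬ (pathTo G ρ hρ2 x).1.Nil := Walk.not_nil_of_ne hx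
    have : G.Adj x ((pathTo G ρ hρ2 x).1.getVert 1) := (pathTo G ρ hρ2 x).1.adj_snd hn
    rwa [Sum.inl.inj h] at this

include hG hρ1 in
lemma adj_par {x y : V} (h : G.Adj x y) :
    par G ρ hρ2 x = Sum.inl y ∨ par G ρ hρ2 y = Sum.inl x := by
  have hroots : ρ x = ρ y := hρ1 x y h.reachable
  by_cases hx : x = ρ x
  · -- x is the root of the component, so y points to x
    right
    have hyy : y ≠ ρ y := by
      rw [← hroots, ← hx]
      exact h.ne'
    have hw : ((Walk.cons h.symm Walk.nil).copy rfl (hx ▸ hroots) :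
        G.Walk y (ρ y)).IsPath := by
      simp [Walk.cons_isPath_iff, h.ne']
    rw [par_not_root G ρ hρ2 hyy, ← path_eq G ρ hG hρ2 _ hw]
    simp
  · by_cases hy' : y = ρ x
    · -- y is the root
      left
      have hw : ((Walk.cons h Walk.nil).copy rfl hy' : G.Walk x (ρ x)).IsPath := by
        simp [Walk.cons_isPath_iff, h.ne]
      rw [par_not_root G ρ hρ2 hx, ← path_eq G ρ hG hρ2 _ hw]
      simp
    · set p := (pathTo G ρ hρ2 x).1 with hpdef
      have hpp : p.IsPath := (pathTo G ρ hρ2 x).2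
      by_cases hyp : y ∈ p.support
      · -- follow p : it must start with the edge x ~ y
        left
        have hdp : (p.dropUntil y hyp).IsPath := hpp.dropUntil hyp
        have hxd : x ∉ (p.dropUntil y hyp).support := by
          have hnodup := hpp.support_nodup
          rw [← p.take_spec hyp, Walk.support_append] at hnodup
          have hdisj := List.disjoint_of_nodup_append hnodup
          have hxtake : x ∈ (p.takeUntil y hyp).support := Walk.start_mem_support _
          have hxtail : x ∉ (p.dropUntil y hyp).support.tail := fun hc => hdisj hxtake hc
          rw [Walk.support_eq_cons]
          intro hc
          rcases List.mem_cons.mp hc with rfl | hc'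
          · exact h.ne rfl
          · exact hxtail hc'
        have hw : (Walk.cons h (p.dropUntil y hyp)).IsPath := hdp.cons hxd
        rw [par_not_root G ρ hρ2 hx, ← path_eq G ρ hG hρ2 _ hw]
        simp
      · -- prepend the edge to p : y points to x
        right
        have hyy : y ≠ ρ y := by
          intro hc
          exact hy' (by rw [hroots, ← hc])
        have hw : ((Walk.cons h.symm p).copy rfl hroots : G.Walk y (ρ y)).IsPath := by
          rw [Walk.isPath_copy]
          exact hpp.cons hyp
        rw [par_not_root G ρ hρ2 hyy, ← path_eq G ρ hG hρ2 _ hw]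
        simp

end GraphToFun

section RoundTrips

open SimpleGraph Walk
open scoped Classical

variable {V : Type*}

lemma orbit_walk (f : V → V ⊕ Fin 1) (hf : Esc f) (x : V) :
    ∃ w : (fGraph f).Walk x (vroot f hf x), w.IsPath ∧
      (∀ z ∈ w.support, ht f hf z ≤ ht f hf x) ∧
      (∀ y, f x = Sum.inl y → w.getVert 1 = y) := by
  induction x using esc_induction f hf with
  | base a b h =>
    refine ⟨Walk.nil.copy rfl (vroot_ground f hf h).symm, by simp, ?_, ?_⟩
    · intro z hz
      rw [Walk.support_copy] at hz
      simp only [Walk.support_nil, List.mem_singleton] at hz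
      subst hz; exact le_rfl
    · intro y hy; rw [h] at hy; cases hy
  | ind a a' h ih =>
    obtain ⟨w', hw'p, hw's, -⟩ := ih
    have hstep := ht_step f hf h
    refine ⟨Walk.cons (adj_of_step f hf h) (w'.copy rfl (vroot_step f hf h).symm),
      ?_, ?_, ?_⟩
    · apply IsPath.cons (by simpa using hw'p)
      rw [Walk.support_copy]
      intro hmem
      have := hw's a hmem
      omega
    · intro z hz
      rw [Walk.support_cons] at hz
      rcases List.mem_cons.mp hz with rfl | hz'
      · exact le_rfl
      · rw [Walk.support_copy] at hz'
        have := hw's z hz'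
        omega
    · intro y hy
      rw [h] at hy
      rw [Walk.getVert_cons_succ, Walk.getVert_zero]
      exact Sum.inl.inj hy

lemma round1 (f : V → V ⊕ Fin 1) (hf : Esc f) (x : V) :
    par (fGraph f) (vroot f hf) (reachable_vroot f hf) x = f x := by
  by_cases hx : x = vroot f hf x
  · rcases h : f x with y | b
    · exfalso
      obtain ⟨b, hb⟩ := f_vroot f hf x
      rw [← hx, h] at hb
      cases hb
    · rw [par_root _ _ _ hx]
      exact congrArg Sum.inr (Subsingleton.elim _ _)
  · rcases h : f x with y | b
    · obtain ⟨w, hwp, -, hw1⟩ := orbit_walk f hf x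
      rw [par_not_root _ _ _ hx,
        ← path_eq (fGraph f) (vroot f hf) (fGraph_acyclic f hf) (reachable_vroot f hf) w hwp,
        hw1 y h]
    · exfalso
      exact hx (vroot_ground f hf h).symm

variable (G : SimpleGraph V) (ρ : V → V) (hG : G.IsAcyclic)
  (hρ1 : ∀ x y, G.Reachable x y → ρ x = ρ y) (hρ2 : ∀ x, G.Reachable x (ρ x))

include hG hρ1 in
lemma round2_graph : fGraph (par G ρ hρ2) = G := by
  ext x y
  rw [fGraph_adj]
  constructor
  · rintro ⟨hne, h | h⟩
    · exact par_adj G ρ hG hρ2 h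
    · exact (par_adj G ρ hG hρ2 h).symm
  · intro h
    exact ⟨h.ne, adj_par G ρ hG hρ1 hρ2 h⟩

include hG hρ1 in
lemma round2_root (hF : Esc (par G ρ hρ2)) (x : V) : vroot (par G ρ hρ2) hF x = ρ x := by
  induction x using esc_induction (par G ρ hρ2) hF with
  | base a b h =>
    have ha : a = ρ a := by
      by_contra hc
      rw [par_not_root G ρ hρ2 hc] at h
      cases h
    rw [vroot_ground _ _ h]; exact ha
  | ind a a' h ih =>
    have hadj : G.Adj a a' := par_adj G ρ hG hρ2 h
    rw [vroot_step _ _ h, ih, hρ1 a a' hadj.reachable]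

end RoundTrips

section Assembly

open SimpleGraph

/-- Rooted forests with a vertex-level root function. -/
def R (n : ℕ) := {q : SimpleGraph (Fin n) × (Fin n → Fin n) //
  q.1.IsAcyclic ∧ (∀ x y, q.1.Reachable x y → q.2 x = q.2 y) ∧ ∀ x, q.1.Reachable x (q.2 x)}

def equiv1 (n : ℕ) : RootedForest n ≃ R n where
  toFun x := ⟨(x.1.1, fun v => x.2.1 (x.1.1.connectedComponentMk v)), x.1.2,
    fun v w h => congrArg x.2.1 (ConnectedComponent.sound h),
    fun v => (ConnectedComponent.eq.mp (x.2.2 (x.1.1.connectedComponentMk v))).symm⟩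
  invFun q := ⟨⟨q.1.1, q.2.1⟩,
    ⟨ConnectedComponent.lift q.1.2 (fun v w p _ => q.2.2.1 v w p.reachable), by
      intro c
      induction c using ConnectedComponent.ind with
      | _ v => exact ConnectedComponent.sound (q.2.2.2 v).symm⟩⟩
  left_inv x := by
    obtain ⟨⟨G, hG⟩, ⟨r, hr⟩⟩ := x
    refine congrArg (Sigma.mk (⟨G, hG⟩ : {H : SimpleGraph (Fin n) // H.IsAcyclic})) (Subtype.ext (funext fun c => ?_))
    induction c using ConnectedComponent.ind with
    | _ v => rfl
  right_inv q := by
    obtain ⟨⟨G, ρ⟩, hG, h1, h2⟩ := q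
    exact Subtype.ext rfl

noncomputable def equiv2 (n : ℕ) : R n ≃ E (Fin n) (Fin 1) where
  toFun q := ⟨par q.1.1 q.1.2 q.2.2.2, par_esc q.1.1 q.1.2 q.2.1 q.2.2.1 q.2.2.2⟩
  invFun f := ⟨(fGraph f.1, vroot f.1 f.2), fGraph_acyclic f.1 f.2,
    fun x y h => vroot_reachable f.1 f.2 h, reachable_vroot f.1 f.2⟩
  left_inv q := by
    obtain ⟨⟨G, ρ⟩, hG, h1, h2⟩ := q
    apply Subtype.ext
    exact Prod.ext (round2_graph G ρ hG h1 h2)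
      (funext fun v => round2_root G ρ hG h1 h2 _ v)
  right_inv f := by
    apply Subtype.ext
    funext x
    exact round1 f.1 f.2 x

end Assembly

end RF

/-- The number of forests of rooted trees on `{1,…,n}` is `(n+1)^(n-1)`. -/
theorem card_rootedForests (n : ℕ) :
    Nat.card (RootedForest n) = (n + 1) ^ (n - 1) := by
  rw [Nat.card_congr ((RF.equiv1 n).trans (RF.equiv2 n))]
  have hc : Nat.card (RF.E (Fin n) (Fin 1)) = RF.c n 1 := rfl
  rw [hc]
  cases n with
  | zero => rw [RF.c_zero]; norm_num
  | succ m => rw [RF.c_closed (m+1) (by omega) 1, one_mul]
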